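/- Let k be a field, let A_1' ∈ M_{m_1,n_1}(ℤ) and A_2' ∈ M_{m_2,n_2}(ℤ), let α_1 ∈ ℤ^{n_1}, α_2 ∈ ℤ^{n_2}, and let γ ∈ ℤ with γ ≠ 0. Form the block matrices A_1 = [[A_1', 0],[α_1, γ]] ∈ M_{m_1+1, n_1+1}(ℤ), A_2 = [[A_2', 0],[α_2, γ]] ∈ M_{m_2+1, n_2+1}(ℤ), and A = [[A_1', 0, 0],[0, A_2', 0],[α_1, α_2, γ]] ∈ M_{m_1+m_2+1, n_1+n_2+1}(ℤ). If the toric ideals ker φ_{A_1} ⊆ k[z_1, x] and ker φ_{A_2} ⊆ k[z_2, x] are both homogeneous with respect to total degree, then the toric ideal ker φ_A ⊆ k[z_1, z_2, x] is homogeneous with respect to total degree. -/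

import Mathlib

open MvPolynomial

/-- The `k`-algebra homomorphism into the Laurent polynomial ring (group algebra `k[ℤ^ρ]`)
sending the variable indexed by `i` to the Laurent monomial whose exponent vector is the
`i`-th column of `B`. -/
noncomputable def phiB (k : Type) [Field k] {ρ σ : Type} (B : Matrix ρ σ ℤ) :
    MvPolynomial σ k →ₐ[k] AddMonoidAlgebra k (ρ → ℤ) :=
  MvPolynomial.aeval fun i => AddMonoidAlgebra.single (fun r => B r i) 1

open scoped Classical

section Aux
variable {k : Type} [Field k] {ρ σ : Type} [Fintype σ]

/-- The linear map on exponent vectors induced by `B`. -/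
noncomputable def Lmap (B : Matrix ρ σ ℤ) (u : σ →₀ ℕ) : ρ → ℤ :=
  fun r => ∑ i, B r i * (u i : ℤ)

lemma degree_eq_univ_sum (u : σ →₀ ℕ) : u.degree = ∑ i, u i := by
  show (∑ i ∈ u.support, u i) = ∑ i, u i
  exact Finset.sum_subset (Finset.subset_univ _)
    (fun i _ hi => Finsupp.notMem_support_iff.mp hi)

lemma phiB_monomial (B : Matrix ρ σ ℤ) (u : σ →₀ ℕ) (c : k) :
    phiB k B (monomial u c) = AddMonoidAlgebra.single (Lmap B u) c := by
  rw [phiB, aeval_monomial, Finsupp.prod]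
  simp only [AddMonoidAlgebra.single_pow, one_pow]
  rw [AddMonoidAlgebra.prod_single, AddMonoidAlgebra.coe_algebraMap]
  rw [Function.comp_apply, AddMonoidAlgebra.single_mul_single]
  rw [Finset.prod_const_one, zero_add, mul_one]
  congr 1
  funext r
  rw [Finset.sum_apply]
  simp only [Pi.smul_apply, smul_eq_mul]
  rw [Lmap]
  rw [← Finset.sum_subset (Finset.subset_univ u.support)
    (fun i _ hi => by rw [Finsupp.notMem_support_iff.mp hi]; push_cast; ring)]
  exact Finset.sum_congr rfl fun i _ => by push_cast; ring

lemma phiB_apply (B : Matrix ρ σ ℤ) (f : MvPolynomial σ k) :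
    phiB k B f = ∑ u ∈ f.support, AddMonoidAlgebra.single (Lmap B u) (coeff u f) := by
  conv_lhs => rw [f.as_sum]
  rw [map_sum]
  exact Finset.sum_congr rfl fun u _ => phiB_monomial B u _

lemma phiB_coeff (B : Matrix ρ σ ℤ) (f : MvPolynomial σ k) (g : ρ → ℤ) :
    (phiB k B f).coeff g = ∑ u ∈ f.support, if Lmap B u = g then coeff u f else 0 := by
  rw [phiB_apply, AddMonoidAlgebra.coeff_sum, Finsupp.finset_sum_apply]
  exact Finset.sum_congr rfl fun u _ => by rw [AddMonoidAlgebra.coeff_single, Finsupp.single_apply]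

/-- Abbreviation for the lattice condition equivalent to homogeneity. -/
def GoodB (B : Matrix ρ σ ℤ) : Prop :=
  ∀ u v : σ →₀ ℕ, Lmap B u = Lmap B v → u.degree = v.degree

lemma good_of_hom (B : Matrix ρ σ ℤ)
    (h : ∀ f ∈ RingHom.ker (phiB k B), ∀ d : ℕ,
      MvPolynomial.homogeneousComponent d f ∈ RingHom.ker (phiB k B)) :
    GoodB B := by
  intro u v huv
  by_contra hne
  have hune : u ≠ v := fun h' => hne (by rw [h'])
  set f : MvPolynomial σ k := monomial u 1 - monomial v 1 with hf
  have hker : f ∈ RingHom.ker (phiB k B) := by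
    rw [RingHom.mem_ker, hf, map_sub, phiB_monomial, phiB_monomial, huv, sub_self]
  have hcomp := h f hker u.degree
  have heq : MvPolynomial.homogeneousComponent u.degree f = monomial u (1 : k) := by
    apply MvPolynomial.ext
    intro d
    rw [coeff_homogeneousComponent]
    rw [hf, coeff_sub, coeff_monomial, coeff_monomial]
    by_cases hdu : u = d
    · subst hdu
      have hvu : v ≠ u := fun h' => hune h'.symm
      simp [hvu]
    · simp only [if_neg hdu]
      split_ifs with h1 h2
      · exact absurd (by rw [h2, ← h1] : u.degree = v.degree) hne
      · simp
      · rfl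
  rw [heq, RingHom.mem_ker, phiB_monomial] at hcomp
  exact one_ne_zero (AddMonoidAlgebra.single_eq_zero.mp hcomp)

lemma hom_of_good (B : Matrix ρ σ ℤ) (hg : GoodB B) :
    ∀ f ∈ RingHom.ker (phiB k B), ∀ d : ℕ,
      MvPolynomial.homogeneousComponent d f ∈ RingHom.ker (phiB k B) := by
  intro f hf d
  rw [RingHom.mem_ker] at hf ⊢
  apply AddMonoidAlgebra.coeff_injective
  apply Finsupp.ext
  intro g
  rw [AddMonoidAlgebra.coeff_zero, Finsupp.coe_zero, Pi.zero_apply, phiB_coeff]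
  have hsub : (MvPolynomial.homogeneousComponent d f).support ⊆ f.support := by
    intro u hu
    rw [MvPolynomial.mem_support_iff] at hu ⊢
    rw [coeff_homogeneousComponent] at hu
    intro h0
    apply hu
    split <;> simp [h0]
  rw [Finset.sum_subset hsub (fun u _ hu => by
    rw [MvPolynomial.notMem_support_iff.mp hu, ite_self])]
  simp_rw [coeff_homogeneousComponent]
  by_cases hex : ∃ u₀ : σ →₀ ℕ, Lmap B u₀ = g ∧ u₀.degree = d
  · obtain ⟨u₀, hu₀g, hu₀d⟩ := hex
    have : ∀ u ∈ f.support,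
        (if Lmap B u = g then (if u.degree = d then coeff u f else 0) else 0)
          = if Lmap B u = g then coeff u f else 0 := by
      intro u _
      by_cases hLu : Lmap B u = g
      · rw [if_pos hLu, if_pos hLu, if_pos (by rw [hg u u₀ (by rw [hLu, hu₀g]), hu₀d])]
      · rw [if_neg hLu, if_neg hLu]
    rw [Finset.sum_congr rfl this, ← phiB_coeff, hf, AddMonoidAlgebra.coeff_zero, Finsupp.coe_zero, Pi.zero_apply]
  · apply Finset.sum_eq_zero
    intro u _
    by_cases hLu : Lmap B u = g
    · rw [if_pos hLu, if_neg (fun hd => hex ⟨u, hLu, hd⟩)]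
    · rw [if_neg hLu]

end Aux

lemma sign_sq {γ : ℤ} (hγ : γ ≠ 0) : γ.sign * γ.sign = 1 := by
  rcases lt_trichotomy γ 0 with h'|h'|h'
  · simp [Int.sign_eq_neg_one_iff_neg.mpr h']
  · exact absurd h' hγ
  · simp [Int.sign_eq_one_iff_pos.mpr h']

lemma block_step {m n : ℕ} (A' : Matrix (Fin m) (Fin n) ℤ) (α : Fin n → ℤ) (γ : ℤ)
    (hγ : γ ≠ 0)
    (hGood : GoodB (Matrix.fromBlocks A' 0
      (Matrix.of fun (_ : Unit) j => α j) (Matrix.of fun (_ : Unit) (_ : Unit) => γ)))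
    (w x : Fin n → ℕ)
    (hrow : ∀ p, ∑ j, A' p j * (w j : ℤ) = ∑ j, A' p j * (x j : ℤ)) :
    γ * ((∑ j, (w j : ℤ)) - ∑ j, (x j : ℤ)) = (∑ j, α j * w j) - ∑ j, α j * x j := by
  set N : ℕ := γ.natAbs with hN
  set δ : ℤ := (∑ j, α j * (w j : ℤ)) - ∑ j, α j * (x j : ℤ) with hδ
  set e : ℤ := γ.sign * δ with he
  set S : ℤ := (∑ j, (w j : ℤ)) - ∑ j, (x j : ℤ) with hS
  set ut : (Fin n ⊕ Unit) →₀ ℕ :=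
    Finsupp.equivFunOnFinite.symm (Sum.elim (fun j => N * w j) (fun _ => (-e).toNat)) with hut
  set vt : (Fin n ⊕ Unit) →₀ ℕ :=
    Finsupp.equivFunOnFinite.symm (Sum.elim (fun j => N * x j) (fun _ => e.toNat)) with hvt
  have hge : γ * e = (N : ℤ) * δ := by
    rw [he, ← mul_assoc, Int.mul_sign_self, hN]
  have hL : Lmap (Matrix.fromBlocks A' 0
      (Matrix.of fun (_ : Unit) j => α j) (Matrix.of fun (_ : Unit) (_ : Unit) => γ)) ut
      = Lmap (Matrix.fromBlocks A' 0
      (Matrix.of fun (_ : Unit) j => α j) (Matrix.of fun (_ : Unit) (_ : Unit) => γ)) vt := by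
    funext r
    rw [Lmap, Lmap]
    rw [Fintype.sum_sum_type, Fintype.sum_sum_type]
    cases r with
    | inl p =>
      simp only [hut, hvt, Finsupp.coe_equivFunOnFinite_symm, Sum.elim_inl,
        Sum.elim_inr, Matrix.fromBlocks_apply₁₁, Matrix.fromBlocks_apply₁₂,
        Matrix.zero_apply, zero_mul, Finset.sum_const, smul_zero, add_zero]
      push_cast
      have h1 : ∀ j, A' p j * ((N : ℤ) * w j) = (N : ℤ) * (A' p j * w j) := fun j => by ring
      have h2 : ∀ j, A' p j * ((N : ℤ) * x j) = (N : ℤ) * (A' p j * x j) := fun j => by ring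
      simp_rw [h1, h2, ← Finset.mul_sum, hrow p]
    | inr q =>
      simp only [hut, hvt, Finsupp.coe_equivFunOnFinite_symm, Sum.elim_inl,
        Sum.elim_inr, Matrix.fromBlocks_apply₂₁, Matrix.fromBlocks_apply₂₂,
        Matrix.of_apply, Finset.sum_const, Finset.card_univ, Fintype.card_unit, one_smul]
      push_cast
      have h1 : ∀ j, α j * ((N : ℤ) * w j) = (N : ℤ) * (α j * w j) := fun j => by ring
      simp_rw [h1]
      have h2 : ∀ j, α j * ((N : ℤ) * x j) = (N : ℤ) * (α j * x j) := fun j => by ring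
      simp_rw [h2, ← Finset.mul_sum]
      have htn2 : γ * (e.toNat : ℤ) - γ * ((-e).toNat : ℤ) = γ * e := by
        rw [← mul_sub, Int.toNat_sub_toNat_neg]
      rw [hδ] at hge
      linarith [hge, htn2]
  have hdeg := hGood ut vt hL
  rw [degree_eq_univ_sum, degree_eq_univ_sum] at hdeg
  rw [Fintype.sum_sum_type, Fintype.sum_sum_type] at hdeg
  simp only [hut, hvt, Finsupp.coe_equivFunOnFinite_symm, Sum.elim_inl,
    Sum.elim_inr, Finset.sum_const, Finset.card_univ, Fintype.card_unit, one_smul] at hdeg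
  have hdegZ : (N : ℤ) * (∑ j, (w j : ℤ)) + (-e).toNat
      = (N : ℤ) * (∑ j, (x j : ℤ)) + e.toNat := by
    have := congrArg (fun t : ℕ => (t : ℤ)) hdeg
    push_cast at this
    rw [Finset.mul_sum, Finset.mul_sum]
    push_cast
    linarith [this]
  have htn : (e.toNat : ℤ) - (-e).toNat = e := Int.toNat_sub_toNat_neg e
  have hNS : (N : ℤ) * S = e := by rw [hS]; linarith [hdegZ, htn]
  have : γ.sign * ((N : ℤ) * S) = γ.sign * e := by rw [hNS]
  rw [← mul_assoc, Int.sign_mul_natAbs, he, ← mul_assoc, sign_sq hγ, one_mul] at this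
  exact this

/-- If the toric ideals of the block matrices `A₁ = [[A₁', 0],[α₁, γ]]` (in variables
`z₁, x`) and `A₂ = [[A₂', 0],[α₂, γ]]` (in variables `z₂, x`) are homogeneous for the
total-degree grading, then so is the toric ideal of the combined block matrix
`A = [[A₁', 0, 0],[0, A₂', 0],[α₁, α₂, γ]]` (in variables `z₁, z₂, x`).
Here the extra variable `x` corresponds to the last column and the extra Laurent variable
`s` to the last row of each matrix. -/
theorem stmt_13 (k : Type) [Field k] (m₁ m₂ n₁ n₂ : ℕ)
    (A₁' : Matrix (Fin m₁) (Fin n₁) ℤ) (A₂' : Matrix (Fin m₂) (Fin n₂) ℤ)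
    (α₁ : Fin n₁ → ℤ) (α₂ : Fin n₂ → ℤ) (γ : ℤ) (hγ : γ ≠ 0)
    (A₁ : Matrix (Fin m₁ ⊕ Unit) (Fin n₁ ⊕ Unit) ℤ)
    (hA₁ : A₁ = Matrix.fromBlocks A₁' 0
      (Matrix.of fun _ j => α₁ j) (Matrix.of fun _ _ => γ))
    (A₂ : Matrix (Fin m₂ ⊕ Unit) (Fin n₂ ⊕ Unit) ℤ)
    (hA₂ : A₂ = Matrix.fromBlocks A₂' 0
      (Matrix.of fun _ j => α₂ j) (Matrix.of fun _ _ => γ))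
    (A : Matrix ((Fin m₁ ⊕ Fin m₂) ⊕ Unit) ((Fin n₁ ⊕ Fin n₂) ⊕ Unit) ℤ)
    (hA : A = Matrix.fromBlocks (Matrix.fromBlocks A₁' 0 0 A₂') 0
      (Matrix.of fun _ c => Sum.elim α₁ α₂ c) (Matrix.of fun _ _ => γ))
    (hhom₁ : ∀ f ∈ RingHom.ker (phiB k A₁), ∀ d : ℕ,
      MvPolynomial.homogeneousComponent d f ∈ RingHom.ker (phiB k A₁))
    (hhom₂ : ∀ f ∈ RingHom.ker (phiB k A₂), ∀ d : ℕ,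
      MvPolynomial.homogeneousComponent d f ∈ RingHom.ker (phiB k A₂)) :
    ∀ f ∈ RingHom.ker (phiB k A), ∀ d : ℕ,
      MvPolynomial.homogeneousComponent d f ∈ RingHom.ker (phiB k A) := by
  have g₁ := good_of_hom (k := k) A₁ hhom₁
  have g₂ := good_of_hom (k := k) A₂ hhom₂
  rw [hA₁] at g₁
  rw [hA₂] at g₂
  apply hom_of_good
  subst hA
  intro u v hL
  set u₁ : Fin n₁ → ℕ := fun j => u (Sum.inl (Sum.inl j)) with hu₁
  set u₂ : Fin n₂ → ℕ := fun j => u (Sum.inl (Sum.inr j)) with hu₂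
  set v₁ : Fin n₁ → ℕ := fun j => v (Sum.inl (Sum.inl j)) with hv₁
  set v₂ : Fin n₂ → ℕ := fun j => v (Sum.inl (Sum.inr j)) with hv₂
  set a : ℕ := u (Sum.inr ()) with ha
  set b : ℕ := v (Sum.inr ()) with hb
  have hLr : ∀ r, Lmap (Matrix.fromBlocks (Matrix.fromBlocks A₁' 0 0 A₂') 0
      (Matrix.of fun _ c => Sum.elim α₁ α₂ c) (Matrix.of fun _ _ => γ)) u r
      = Lmap _ v r := fun r => congrFun hL r
  have hrow₁ : ∀ p : Fin m₁, ∑ j, A₁' p j * (u₁ j : ℤ) = ∑ j, A₁' p j * (v₁ j : ℤ) := by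
    intro p
    have := hLr (Sum.inl (Sum.inl p))
    rw [Lmap, Lmap, Fintype.sum_sum_type, Fintype.sum_sum_type,
      Fintype.sum_sum_type, Fintype.sum_sum_type] at this
    simpa using this
  have hrow₂ : ∀ p : Fin m₂, ∑ j, A₂' p j * (u₂ j : ℤ) = ∑ j, A₂' p j * (v₂ j : ℤ) := by
    intro p
    have := hLr (Sum.inl (Sum.inr p))
    rw [Lmap, Lmap, Fintype.sum_sum_type, Fintype.sum_sum_type,
      Fintype.sum_sum_type, Fintype.sum_sum_type] at this
    simpa using this
  have hlast : (∑ j, α₁ j * (u₁ j : ℤ)) + (∑ j, α₂ j * (u₂ j : ℤ)) + γ * a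
      = (∑ j, α₁ j * (v₁ j : ℤ)) + (∑ j, α₂ j * (v₂ j : ℤ)) + γ * b := by
    have := hLr (Sum.inr ())
    rw [Lmap, Lmap, Fintype.sum_sum_type, Fintype.sum_sum_type,
      Fintype.sum_sum_type, Fintype.sum_sum_type] at this
    simpa [add_assoc] using this
  have hb₁ := block_step A₁' α₁ γ hγ g₁ u₁ v₁ hrow₁
  have hb₂ := block_step A₂' α₂ γ hγ g₂ u₂ v₂ hrow₂
  rw [degree_eq_univ_sum, degree_eq_univ_sum]
  have hZ : ((∑ i, u i : ℕ) : ℤ) = ((∑ i, v i : ℕ) : ℤ) := by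
    push_cast
    rw [Fintype.sum_sum_type, Fintype.sum_sum_type, Fintype.sum_sum_type,
      Fintype.sum_sum_type]
    simp only [Fintype.sum_unique]
    have hkey : γ * (((∑ j, (u₁ j : ℤ)) + ∑ j, (u₂ j : ℤ)) + a
        - (((∑ j, (v₁ j : ℤ)) + ∑ j, (v₂ j : ℤ)) + b)) = 0 := by
      linear_combination hb₁ + hb₂ + hlast
    rcases mul_eq_zero.mp hkey with h | h
    · exact absurd h hγ
    · linarith [h]
  exact_mod_cast hZ
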